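/- Let x, y be real numbers with xy < 1, and set J = 1 − xy, b = (√J − 1)/y, b* = (√J − 1)/x (assuming x ≠ 0 ≠ y), and α² = (√J + 1)/(2J). Then α² = (1 + bb*)/(1 − bb*)², and moreover 1/((1 − bb*)α) = α(1 + b*x) and b/((1 − bb*)α) = −α(x + b). (These are the conditions G₊₁ = 0 and G₋₁ = 0.) -/

import Mathlib

/-- with J = 1 - xy, b = (√J - 1)/y, b* = (√J - 1)/x and
α² = (√J + 1)/(2J), one has α² = (1 + bb*)/(1 - bb*)², and the relations
1/((1 - bb*)α) = α(1 + b*x) and b/((1 - bb*)α) = -α(x + b)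
(the conditions G₊₁ = 0 and G₋₁ = 0). -/
theorem stmt10 (x y : ℝ) (hx : x ≠ 0) (hy : y ≠ 0) (hxy : x * y < 1)
    (J b bs α2 α : ℝ)
    (hJ : J = 1 - x * y)
    (hb : b = (Real.sqrt J - 1) / y)
    (hbs : bs = (Real.sqrt J - 1) / x)
    (hα2 : α2 = (Real.sqrt J + 1) / (2 * J))
    (hα : α = Real.sqrt α2) :
    α2 = (1 + b * bs) / (1 - b * bs) ^ 2 ∧
    1 / ((1 - b * bs) * α) = α * (1 + bs * x) ∧
    b / ((1 - b * bs) * α) = -(α * (x + b)) := by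
  have hJpos : 0 < J := by rw [hJ]; linarith
  set s := Real.sqrt J with hsdef
  have hspos : 0 < s := Real.sqrt_pos.mpr hJpos
  have hs2 : s ^ 2 = J := Real.sq_sqrt hJpos.le
  have hα2pos : 0 < α2 := by
    rw [hα2]; positivity
  have hαpos : 0 < α := by rw [hα]; exact Real.sqrt_pos.mpr hα2pos
  have hαsq : α ^ 2 = α2 := by rw [hα]; exact Real.sq_sqrt hα2pos.le
  -- key: b * bs = (1 - s)/(1 + s)
  have hbb : b * bs = (1 - s) / (1 + s) := by
    rw [hb, hbs]
    rw [div_mul_div_comm]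
    rw [div_eq_div_iff (by exact mul_ne_zero hy hx) (by positivity)]
    have hxy' : x * y = 1 - s ^ 2 := by rw [hs2]; linarith
    nlinarith [hxy']
  have h1 : 1 - b * bs = 2 * s / (1 + s) := by
    rw [hbb]; field_simp; ring
  have h1ne : 1 - b * bs ≠ 0 := by rw [h1]; positivity
  have hα2' : α2 = (s + 1) / (2 * s ^ 2) := by rw [hα2, hs2]
  have hbsx : bs * x = s - 1 := by rw [hbs]; field_simp
  have hby : b * y = s - 1 := by rw [hb]; field_simp
  refine ⟨?_, ?_, ?_⟩
  · rw [hbb, hα2']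
    field_simp
    have hs0 : s ≠ 0 := hspos.ne'
    have e : s ^ 2 * s⁻¹ ^ 2 = 1 := by rw [← mul_pow, mul_inv_cancel₀ hs0, one_pow]
    linear_combination (-(1 + s)) * e
  · rw [h1, hbsx]
    have hA : α ^ 2 * (2 * s ^ 2) = s + 1 := by
      rw [hαsq, hα2']; field_simp
    field_simp
    nlinarith [hA]
  · have hxb : x + b = s * (1 - s) / y := by
      rw [hb]
      field_simp
      have : x * y = 1 - s ^ 2 := by rw [hs2]; linarith
      nlinarith [this]
    rw [h1, hxb]
    rw [div_eq_iff (by positivity)]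
    have hA : α ^ 2 * (2 * s ^ 2) = s + 1 := by
      rw [hαsq, hα2']; field_simp
    have hbval : b * y = s - 1 := hby
    rw [hb]
    field_simp
    ring_nf
    linear_combination (1 - s) * hA
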